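/- Let K be a field of characteristic p, let q be a power of p, and let m be an odd positive integer. Suppose x, z ∈ K satisfy z^(q^m) + z = x^(q^m + 1). Set w = Σ_{i=0}^{m−1} (−1)^i · z^(q^i). Then w^q + w = x^(q^m + 1). (That is, the map (x, z) ↦ (x, Σ_{i=0}^{m−1} (−1)^i z^(q^i)) sends points of the curve z^(q^m) + z = x^(q^m+1) to points of the curve w^q + w = x^(q^m+1).) -/
import Mathlib


/-- The map `(x, z) ↦ (x, Σ_{i=0}^{m-1} (-1)^i z^(q^i))` sends points of the curve
`z^(q^m) + z = x^(q^m + 1)` to points of the curve `w^q + w = x^(q^m + 1)`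
(for `m` odd). -/
theorem curve_morphism_trace_like
    (p : ℕ) (hp : p.Prime) (K : Type*) [Field K] [CharP K p]
    (f : ℕ) (hf : 1 ≤ f) (q : ℕ) (hq : q = p ^ f)
    (m : ℕ) (hm : 1 ≤ m) (hmodd : Odd m)
    (x z : K) (hxz : z ^ (q ^ m) + z = x ^ (q ^ m + 1)) :
    (∑ i ∈ Finset.range m, (-1 : K) ^ i * z ^ (q ^ i)) ^ q
        + ∑ i ∈ Finset.range m, (-1 : K) ^ i * z ^ (q ^ i)
      = x ^ (q ^ m + 1) := by
  haveI := hp.one_lt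
  haveI : Fact p.Prime := ⟨hp⟩
  subst hq
  set g : ℕ → K := fun i => (-1) ^ i * z ^ ((p ^ f) ^ i) with hg
  have hneg : ((-1 : K)) ^ (p ^ f) = -1 := by
    have := map_neg (iterateFrobenius K p f) (1 : K)
    simpa [iterateFrobenius_def] using this
  have hstep : ∀ i, g i ^ (p ^ f) = -g (i + 1) := by
    intro i
    simp only [hg]
    rw [mul_pow, ← pow_mul (-1 : K), mul_comm i (p ^ f), pow_mul, hneg, ← pow_mul z,
      ← pow_succ]
    ring
  have hfrob : (∑ i ∈ Finset.range m, g i) ^ (p ^ f)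
      = ∑ i ∈ Finset.range m, -g (i + 1) := by
    rw [← iterateFrobenius_def, map_sum]
    exact Finset.sum_congr rfl fun i _ => by rw [iterateFrobenius_def, hstep]
  calc (∑ i ∈ Finset.range m, g i) ^ (p ^ f) + ∑ i ∈ Finset.range m, g i
      = ∑ i ∈ Finset.range m, (g i - g (i + 1)) := by
        rw [hfrob, ← Finset.sum_add_distrib]
        exact Finset.sum_congr rfl fun i _ => by ring
    _ = g 0 - g m := Finset.sum_range_sub' g m
    _ = z ^ (p ^ f) ^ m + z := by
        simp [hg, hmodd.neg_one_pow]; ring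
    _ = x ^ ((p ^ f) ^ m + 1) := hxz
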